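/- Under the hypotheses of the M=2 implicit solution (V differentiable with 2(3T+2)V² + 2YV + Y²/(3T+2) = cT + X, 3T+2 ≠ 0, 2(3T+2)V + Y ≠ 0), define p = −Y/(3T+2) − V and a = −c·V·(V + Y/(3T+2)) = c·V·p. Then a_Y = 2·(a·(p + V))_X. -/

import Mathlib

noncomputable def dX (F : ℝ × ℝ × ℝ → ℝ) (z : ℝ × ℝ × ℝ) : ℝ := fderiv ℝ F z (1, 0, 0)
noncomputable def dY (F : ℝ × ℝ × ℝ → ℝ) (z : ℝ × ℝ × ℝ) : ℝ := fderiv ℝ F z (0, 1, 0)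

set_option maxHeartbeats 1000000 in
/-- Points are `z = (X, Y, T)`, so `z.1 = X`, `z.2.1 = Y`, `z.2.2 = T`. -/
theorem m2_source_equation_a (c : ℝ) (U : Set (ℝ × ℝ × ℝ)) (hU : IsOpen U)
    (V : ℝ × ℝ × ℝ → ℝ) (hV : ∀ z ∈ U, DifferentiableAt ℝ V z)
    (hT : ∀ z ∈ U, 3 * z.2.2 + 2 ≠ 0)
    (hrel : ∀ z ∈ U,
      2 * (3 * z.2.2 + 2) * (V z) ^ 2 + 2 * z.2.1 * V z
        + z.2.1 ^ 2 / (3 * z.2.2 + 2) = c * z.2.2 + z.1)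
    (hnd : ∀ z ∈ U, 2 * (3 * z.2.2 + 2) * V z + z.2.1 ≠ 0)
    (p a : ℝ × ℝ × ℝ → ℝ)
    (hp : p = fun z => -z.2.1 / (3 * z.2.2 + 2) - V z)
    (ha : a = fun z => -c * V z * (V z + z.2.1 / (3 * z.2.2 + 2))) :
    ∀ z ∈ U, dY a z = 2 * dX (fun w => a w * (p w + V w)) z := by
  subst hp ha
  intro z hz
  have hVz := hV z hz
  have hKne : (3 : ℝ) * z.2.2 + 2 ≠ 0 := hT z hz
  have hndz := hnd z hz
  -- basic derivatives
  have hY' : HasFDerivAt (fun w : ℝ×ℝ×ℝ => w.2.1)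
      ((ContinuousLinearMap.fst ℝ ℝ ℝ).comp (ContinuousLinearMap.snd ℝ ℝ (ℝ×ℝ))) z :=
    (hasFDerivAt_fst).comp z (hasFDerivAt_snd)
  have hT' : HasFDerivAt (fun w : ℝ×ℝ×ℝ => w.2.2)
      ((ContinuousLinearMap.snd ℝ ℝ ℝ).comp (ContinuousLinearMap.snd ℝ ℝ (ℝ×ℝ))) z :=
    (hasFDerivAt_snd).comp z (hasFDerivAt_snd)
  have hKd : HasFDerivAt (fun w : ℝ×ℝ×ℝ => 3 * w.2.2 + 2)
      ((3:ℝ) • ((ContinuousLinearMap.snd ℝ ℝ ℝ).comp (ContinuousLinearMap.snd ℝ ℝ (ℝ×ℝ)))) z :=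
    (hT'.const_mul 3).add_const 2
  have hVd := hVz.hasFDerivAt
  have hInv := (hasDerivAt_inv hKne).comp_hasFDerivAt z hKd
  -- the multiplied-out implicit relation
  set G : ℝ×ℝ×ℝ → ℝ := fun w =>
    2 * ((3*w.2.2+2) * (3*w.2.2+2)) * (V w * V w) + 2 * ((3*w.2.2+2) * w.2.1) * V w
      + w.2.1 * w.2.1 - (3*w.2.2+2) * (c * w.2.2 + w.1) with hGdef
  have hG0 : ∀ w ∈ U, G w = 0 := by
    intro w hw
    have h := hrel w hw
    have hKw := hT w hw
    rw [hGdef]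
    field_simp at h
    ring_nf
    ring_nf at h
    linarith
  have hGz : HasFDerivAt G _ z :=
    ((((((hKd.mul hKd).const_mul 2).mul (hVd.mul hVd)).add
      (((hKd.mul hY').const_mul 2).mul hVd)).add (hY'.mul hY')).sub
      (hKd.mul ((hT'.const_mul c).add hasFDerivAt_fst)))
  have hfz : fderiv ℝ G z = 0 := by
    have hev : G =ᶠ[nhds z] (fun _ => (0:ℝ)) :=
      Filter.eventually_of_mem (hU.mem_nhds hz) hG0
    rw [hev.fderiv_eq, fderiv_fun_const]
    rfl
  have hLG := hGz.fderiv
  rw [hfz] at hLG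
  have h1 := congrArg (fun L : (ℝ×ℝ×ℝ) →L[ℝ] ℝ => L (1,0,0)) hLG.symm
  have h2 := congrArg (fun L : (ℝ×ℝ×ℝ) →L[ℝ] ℝ => L (0,1,0)) hLG.symm
  simp [ContinuousLinearMap.add_apply, ContinuousLinearMap.sub_apply,
    ContinuousLinearMap.smul_apply, ContinuousLinearMap.comp_apply, smul_eq_mul] at h1 h2
  -- explicit values of the directional derivatives of V
  have hKnd : (3*z.2.2+2) * (2 * (3*z.2.2+2) * V z + z.2.1) ≠ 0 := mul_ne_zero hKne hndz
  have hv1e : fderiv ℝ V z (1, 0) = 1 / (2 * (2 * (3*z.2.2+2) * V z + z.2.1)) := by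
    rw [eq_div_iff (by simpa using hndz)]
    have hcan : (3*z.2.2+2) * (fderiv ℝ V z (1, 0) * (2 * (2 * (3*z.2.2+2) * V z + z.2.1)))
        = (3*z.2.2+2) * 1 := by linear_combination h1
    exact mul_left_cancel₀ hKne hcan
  have hv2e : fderiv ℝ V z (0, 1, 0)
      = -(((3*z.2.2+2) * V z + z.2.1) / ((3*z.2.2+2) * (2 * (3*z.2.2+2) * V z + z.2.1))) := by
    rw [neg_div', eq_div_iff hKnd]
    linear_combination h2 / 2
  -- derivatives of a and the flux
  have hA : HasFDerivAt (fun w : ℝ×ℝ×ℝ => -c * V w * (V w + w.2.1 * (3*w.2.2+2)⁻¹)) _ z :=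
    (hVd.const_mul (-c)).mul (hVd.add (hY'.mul hInv))
  have hF : HasFDerivAt (fun w : ℝ×ℝ×ℝ =>
      (-c * V w * (V w + w.2.1 * (3*w.2.2+2)⁻¹)) * ((-w.2.1) * (3*w.2.2+2)⁻¹ - V w + V w)) _ z :=
    hA.mul (((hY'.neg.mul hInv).sub hVd).add hVd)
  unfold dX dY
  simp only [div_eq_mul_inv, neg_div]
  rw [hA.fderiv, hF.fderiv]
  simp [ContinuousLinearMap.add_apply, ContinuousLinearMap.sub_apply,
    ContinuousLinearMap.smul_apply, ContinuousLinearMap.comp_apply, smul_eq_mul]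
  rw [show (fderiv ℝ V z) (1, 0, 0) = _ from hv1e, hv2e]
  have hnd3 : V z * 2 * (3 * z.2.2 + 2) + z.2.1 ≠ 0 := by
    rw [show V z * 2 * (3 * z.2.2 + 2) = 2 * (3 * z.2.2 + 2) * V z by ring]; exact hndz
  field_simp
  ring
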